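/- Fix δ ∈ [0, 1 - 1/q) and ε with 0 < ε < 1 - h_q(δ). Let k = ⌈(1 - h_q(δ) - ε)·n⌉ and let G be a random k×n matrix over F_q with entries chosen independently and uniformly. Then with probability at least 1 - q^{-εn+1}, every nonzero vector u ∈ F_q^k satisfies wt(uG) ≥ δn; in particular the code generated by G has relative minimum distance at least δ and rate at least 1 - h_q(δ) - ε. -/

import Mathlib

/-- The `q`-ary entropy function. -/
noncomputable def qaryEntropy (q : ℕ) (x : ℝ) : ℝ :=
  x * Real.logb q (q - 1) - x * Real.logb q x - (1 - x) * Real.logb q (1 - x)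

open Finset

lemma entropy_rpow {q : ℕ} (hq : 2 ≤ q) {δ : ℝ} (h0 : 0 < δ) (h1 : δ < 1) (m : ℝ) :
    (q : ℝ) ^ (-(qaryEntropy q δ * m)) =
      (δ / (((q : ℝ) - 1) * (1 - δ))) ^ (δ * m) * (1 - δ) ^ m := by
  have hq1 : (1 : ℝ) < q := by exact_mod_cast Nat.lt_of_lt_of_le one_lt_two hq
  have hq0 : (0 : ℝ) < q := by linarith
  have hqm1 : (0 : ℝ) < (q : ℝ) - 1 := by linarith
  have h1δ : (0 : ℝ) < 1 - δ := by linarith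
  have hr : (0 : ℝ) < δ / (((q : ℝ) - 1) * (1 - δ)) := by positivity
  rw [Real.rpow_def_of_pos hq0, Real.rpow_def_of_pos hr, Real.rpow_def_of_pos h1δ,
    ← Real.exp_add]
  congr 1
  have hlogq : Real.log q ≠ 0 := ne_of_gt (Real.log_pos hq1)
  unfold qaryEntropy
  rw [Real.log_div (ne_of_gt h0) (by positivity),
    Real.log_mul (ne_of_gt hqm1) (ne_of_gt h1δ)]
  simp only [Real.logb]
  field_simp
  ring

lemma fiber_bound {n k : ℕ} {F : Type*} [Field F] [Fintype F] [DecidableEq F]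
    (B : Finset (Fin n → F)) {u : Fin k → F} (hu : u ≠ 0) :
    (univ.filter fun G : Matrix (Fin k) (Fin n) F => Matrix.vecMul u G ∈ B).card ≤
      B.card * (Fintype.card F ^ n) ^ (k - 1) := by
  obtain ⟨j, hj⟩ : ∃ j, u j ≠ 0 := by
    by_contra h; push_neg at h; exact hu (funext h)
  have hcard : (B ×ˢ (univ : Finset ({i : Fin k // i ≠ j} → Fin n → F))).card =
      B.card * (Fintype.card F ^ n) ^ (k - 1) := by
    rw [Finset.card_product, Finset.card_univ, Fintype.card_fun, Fintype.card_fun,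
      Fintype.card_fin]
    congr 2
    · exact (Fintype.card_subtype_compl (fun i : Fin k => i = j)).trans
        (by rw [Fintype.card_subtype_eq, Fintype.card_fin])
  rw [← hcard]
  apply Finset.card_le_card_of_injOn
    (fun G => (Matrix.vecMul u G, fun i : {i : Fin k // i ≠ j} => G i.1))
  · intro G hG
    simp only [Finset.mem_coe, Finset.mem_product]
    exact ⟨(Finset.mem_filter.mp hG).2, Finset.mem_univ _⟩
  · intro G _ G' _ hGG'
    have h1 : Matrix.vecMul u G = Matrix.vecMul u G' := congrArg Prod.fst hGG'
    have h2 : ∀ i : Fin k, i ≠ j → G i = G' i := fun i hi =>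
      congrFun (congrArg Prod.snd hGG') ⟨i, hi⟩
    funext i l
    rcases eq_or_ne i j with rfl | hi
    · have hs : ∑ i, u i * G i l = ∑ i, u i * G' i l := by
        have := congrFun h1 l
        simpa [Matrix.vecMul, dotProduct] using this
      rw [← Finset.add_sum_erase _ _ (Finset.mem_univ i),
        ← Finset.add_sum_erase _ _ (Finset.mem_univ i)] at hs
      have hrest : ∑ x ∈ Finset.univ.erase i, u x * G x l
          = ∑ x ∈ Finset.univ.erase i, u x * G' x l :=
        Finset.sum_congr rfl fun x hx => by
          rw [h2 x (Finset.mem_erase.mp hx).1]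
      rw [hrest] at hs
      have heq : u i * G i l = u i * G' i l := add_right_cancel hs
      exact mul_left_cancel₀ hj heq
    · rw [h2 i hi]

lemma ball_bound {q n : ℕ} {F : Type*} [Field F] [Fintype F] [DecidableEq F]
    (hqcard : Fintype.card F = q) {δ : ℝ} (hδ0 : 0 ≤ δ) (hδ1 : δ < 1 - 1 / q) :
    (((univ.filter fun v : Fin n → F => (hammingNorm v : ℝ) < δ * n)).card : ℝ) ≤
      (q : ℝ) ^ (qaryEntropy q δ * (n : ℝ)) := by
  have hq : 2 ≤ q := hqcard ▸ Fintype.one_lt_card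
  have hq1 : (1 : ℝ) < q := by exact_mod_cast hq
  have hq0 : (0 : ℝ) < q := by linarith
  have hqm1 : (0 : ℝ) < (q : ℝ) - 1 := by linarith
  have hδ1' : δ < 1 := lt_of_lt_of_le hδ1 (by
    have : (0:ℝ) ≤ 1 / q := by positivity
    linarith)
  have h1δ : (0 : ℝ) < 1 - δ := by linarith
  rcases eq_or_lt_of_le hδ0 with h0 | h0
  · -- δ = 0 : the ball is empty
    have : (univ.filter fun v : Fin n → F => (hammingNorm v : ℝ) < δ * n) = ∅ := by
      apply Finset.filter_false_of_mem
      intro v _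
      rw [← h0]
      simp
    rw [this]
    simp only [Finset.card_empty, Nat.cast_zero]
    positivity
  -- δ > 0
  set B := univ.filter fun v : Fin n → F => (hammingNorm v : ℝ) < δ * n with hB
  set w : F → ℝ := fun a => if a = 0 then 1 - δ else δ / ((q : ℝ) - 1) with hw
  have hw0 : ∀ a, 0 ≤ w a := by
    intro a; rw [hw]; dsimp only; split
    · linarith
    · positivity
  have hcardne : (univ.filter fun a : F => ¬ a = 0).card = q - 1 := by
    have h1 : (univ.filter fun a : F => a = 0).card = 1 := by
      rw [Finset.filter_eq' univ (0 : F)]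
      simp
    have := Finset.card_filter_add_card_filter_not (s := (univ : Finset F))
      (p := fun a : F => a = 0)
    rw [Finset.card_univ, hqcard, h1] at this
    omega
  have hsum : ∑ a : F, w a = 1 := by
    rw [hw]
    rw [Finset.sum_ite, Finset.sum_const, Finset.sum_const, hcardne]
    have h1 : (univ.filter fun a : F => a = 0).card = 1 := by
      rw [Finset.filter_eq' univ (0 : F)]; simp
    rw [h1]
    have hcast : ((q - 1 : ℕ) : ℝ) = (q : ℝ) - 1 := by
      have : 1 ≤ q := by omega
      push_cast [Nat.cast_sub this]
      ring
    rw [nsmul_eq_mul, nsmul_eq_mul, hcast]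
    field_simp
    push_cast; ring
  have hwtle : ∀ v : Fin n → F, hammingNorm v ≤ n := fun v => by
    simpa using hammingNorm_le_card_fintype (x := v)
  have hprod : ∀ v : Fin n → F,
      (δ / ((q : ℝ) - 1)) ^ (hammingNorm v) * (1 - δ) ^ (n - hammingNorm v)
        = ∏ l, w (v l) := by
    intro v
    rw [← Finset.prod_filter_mul_prod_filter_not univ (fun l => v l ≠ 0) (fun l => w (v l))]
    have e1 : ∏ l ∈ univ.filter (fun l => v l ≠ 0), w (v l)
        = ∏ _l ∈ univ.filter (fun l => v l ≠ 0), (δ / ((q : ℝ) - 1)) :=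
      Finset.prod_congr rfl (fun l hl => by simp [hw, (Finset.mem_filter.mp hl).2])
    have e2 : ∏ l ∈ univ.filter (fun l => ¬ v l ≠ 0), w (v l)
        = ∏ _l ∈ univ.filter (fun l => ¬ v l ≠ 0), (1 - δ) :=
      Finset.prod_congr rfl (fun l hl => by
        have h := (Finset.mem_filter.mp hl).2
        push_neg at h
        simp [hw, h])
    have hc1 : (univ.filter fun l : Fin n => v l ≠ 0).card = hammingNorm v := rfl
    have hc2 : (univ.filter fun l : Fin n => ¬ v l ≠ 0).card = n - hammingNorm v := by
      have hc := Finset.card_filter_add_card_filter_not (s := (univ : Finset (Fin n)))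
        (p := fun l => v l ≠ 0)
      rw [Finset.card_univ, Fintype.card_fin] at hc
      omega
    rw [e1, e2, Finset.prod_const, Finset.prod_const, hc1, hc2]
  have htotal : ∑ v : Fin n → F, ∏ l, w (v l) = 1 := by
    have := Finset.sum_prod_piFinset (univ : Finset F) (fun _ : Fin n => w)
    rw [Fintype.piFinset_univ] at this
    rw [this]
    simp [hsum]
  -- pointwise lower bound on ball members
  have hpoint : ∀ v ∈ B, (q : ℝ) ^ (-(qaryEntropy q δ * (n : ℝ))) ≤ ∏ l, w (v l) := by
    intro v hv
    have hvlt : (hammingNorm v : ℝ) < δ * n := (Finset.mem_filter.mp hv).2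
    rw [← hprod v, entropy_rpow hq h0 hδ1' (n : ℝ)]
    set r := δ / (((q : ℝ) - 1) * (1 - δ)) with hrdef
    have hr0 : 0 < r := by positivity
    have hr1 : r ≤ 1 := by
      rw [hrdef, div_le_one (by positivity)]
      have h2 := mul_lt_mul_of_pos_right hδ1 hq0
      have h3 : (1 - 1 / (q:ℝ)) * q = (q:ℝ) - 1 := by field_simp
      rw [h3] at h2
      nlinarith
    have hsplit : δ / ((q : ℝ) - 1) = r * (1 - δ) := by
      rw [hrdef]; field_simp
    have hRHS : (δ / ((q : ℝ) - 1)) ^ (hammingNorm v) * (1 - δ) ^ (n - hammingNorm v)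
        = r ^ (hammingNorm v) * (1 - δ) ^ n := by
      rw [hsplit, mul_pow, mul_assoc, ← pow_add]
      congr 2
      have := hwtle v
      omega
    rw [hRHS]
    have hpow : (1 - δ) ^ ((n : ℕ) : ℝ) = (1 - δ) ^ n := Real.rpow_natCast _ n
    rw [← hpow]
    apply mul_le_mul_of_nonneg_right _ (le_of_lt (Real.rpow_pos_of_pos h1δ _))
    calc r ^ (δ * (n:ℝ)) ≤ r ^ ((hammingNorm v : ℕ) : ℝ) :=
          Real.rpow_le_rpow_of_exponent_ge hr0 hr1 (le_of_lt hvlt)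
      _ = r ^ (hammingNorm v) := Real.rpow_natCast _ _
  -- assemble
  have hchain : (B.card : ℝ) * (q : ℝ) ^ (-(qaryEntropy q δ * (n : ℝ))) ≤ 1 := by
    calc (B.card : ℝ) * (q : ℝ) ^ (-(qaryEntropy q δ * (n : ℝ)))
        = ∑ _v ∈ B, (q : ℝ) ^ (-(qaryEntropy q δ * (n : ℝ))) := by
          rw [Finset.sum_const, nsmul_eq_mul]
      _ ≤ ∑ v ∈ B, ∏ l, w (v l) := Finset.sum_le_sum hpoint
      _ ≤ ∑ v : Fin n → F, ∏ l, w (v l) := by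
          apply Finset.sum_le_sum_of_subset_of_nonneg (Finset.subset_univ B)
          intro v _ _
          exact Finset.prod_nonneg fun l _ => hw0 (v l)
      _ = 1 := htotal
  have hpos : (0:ℝ) < (q : ℝ) ^ (qaryEntropy q δ * (n : ℝ)) := Real.rpow_pos_of_pos hq0 _
  rw [Real.rpow_neg (le_of_lt hq0), ← div_eq_mul_inv] at hchain
  exact (div_le_one hpos).mp hchain

/-- For `δ ∈ [0, 1 - 1/q)`, `0 < ε < 1 - h_q(δ)` and
`k = ⌈(1 - h_q(δ) - ε)·n⌉`, a uniformly random `k×n` matrix `G` over `F_q`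
satisfies, with probability at least `1 - q^(-εn+1)`, that every nonzero
`u ∈ F_q^k` has `wt(uG) ≥ δn`; moreover the rate is at least `1 - h_q(δ) - ε`. -/
theorem stmt2 {q n : ℕ} {F : Type*} [Field F] [Fintype F] [DecidableEq F]
    (hqcard : Fintype.card F = q) (hn : 0 < n)
    (δ ε : ℝ) (hδ0 : 0 ≤ δ) (hδ1 : δ < 1 - 1 / q)
    (hε0 : 0 < ε) (hε1 : ε < 1 - qaryEntropy q δ)
    (k : ℕ) (hk : k = ⌈(1 - qaryEntropy q δ - ε) * n⌉₊) :
    (1 : ℝ) - (q : ℝ) ^ (-(ε * n) + 1) ≤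
      ((Finset.univ.filter (fun G : Matrix (Fin k) (Fin n) F =>
          ∀ u : Fin k → F, u ≠ 0 → δ * n ≤ (hammingNorm (Matrix.vecMul u G) : ℝ))).card : ℝ) /
        (Fintype.card (Matrix (Fin k) (Fin n) F)) ∧
      1 - qaryEntropy q δ - ε ≤ (k : ℝ) / n := by
  classical
  have hq : 2 ≤ q := hqcard ▸ Fintype.one_lt_card
  have hq1 : (1 : ℝ) < q := by exact_mod_cast hq
  have hq0 : (0 : ℝ) < q := by linarith
  have hn0 : (0 : ℝ) < n := by exact_mod_cast hn
  have hrate : 1 - qaryEntropy q δ - ε ≤ (k : ℝ) / n := by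
    rw [le_div_iff₀ hn0, hk]
    exact Nat.le_ceil _
  refine ⟨?_, hrate⟩
  have hx0 : 0 < 1 - qaryEntropy q δ - ε := by linarith
  have hk1 : 1 ≤ k := by
    rw [hk]
    exact Nat.one_le_iff_ne_zero.mpr (Nat.pos_iff_ne_zero.mp
      (Nat.ceil_pos.mpr (by positivity)))
  set B := univ.filter fun v : Fin n → F => (hammingNorm v : ℝ) < δ * n with hBdef
  have hball : (B.card : ℝ) ≤ (q : ℝ) ^ (qaryEntropy q δ * (n : ℝ)) :=
    ball_bound hqcard hδ0 hδ1
  set P : Matrix (Fin k) (Fin n) F → Prop := fun G =>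
    ∀ u : Fin k → F, u ≠ 0 → δ * n ≤ (hammingNorm (Matrix.vecMul u G) : ℝ) with hP
  have hsplit := Finset.card_filter_add_card_filter_not (s := univ) (p := P)
  rw [Finset.card_univ] at hsplit
  have hbadsub : (univ.filter fun G => ¬ P G) ⊆
      (univ.filter fun u : Fin k → F => u ≠ 0).biUnion
        (fun u => univ.filter fun G : Matrix (Fin k) (Fin n) F => Matrix.vecMul u G ∈ B) := by
    intro G hG
    have hng : ¬ ∀ u : Fin k → F, u ≠ 0 → δ * n ≤ (hammingNorm (Matrix.vecMul u G) : ℝ) :=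
      (Finset.mem_filter.mp hG).2
    push_neg at hng
    obtain ⟨u, hu, hlt⟩ := hng
    exact Finset.mem_biUnion.mpr ⟨u, Finset.mem_filter.mpr ⟨Finset.mem_univ _, hu⟩,
      Finset.mem_filter.mpr ⟨Finset.mem_univ _,
        by rw [hBdef]; exact Finset.mem_filter.mpr ⟨Finset.mem_univ _, hlt⟩⟩⟩
  have hbadcard : (univ.filter fun G => ¬ P G).card ≤
      q ^ k * (B.card * (q ^ n) ^ (k - 1)) := by
    calc (univ.filter fun G => ¬ P G).card
        ≤ ((univ.filter fun u : Fin k → F => u ≠ 0).biUnion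
            (fun u => univ.filter fun G : Matrix (Fin k) (Fin n) F =>
              Matrix.vecMul u G ∈ B)).card := Finset.card_le_card hbadsub
      _ ≤ ∑ u ∈ univ.filter fun u : Fin k → F => u ≠ 0,
            (univ.filter fun G : Matrix (Fin k) (Fin n) F =>
              Matrix.vecMul u G ∈ B).card := Finset.card_biUnion_le
      _ ≤ ∑ _u ∈ univ.filter fun u : Fin k → F => u ≠ 0,
            B.card * (q ^ n) ^ (k - 1) := Finset.sum_le_sum fun u hu => by
              have := fiber_bound B (Finset.mem_filter.mp hu).2
              rwa [hqcard] at this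
      _ = (univ.filter fun u : Fin k → F => u ≠ 0).card
            * (B.card * (q ^ n) ^ (k - 1)) := by
          rw [Finset.sum_const, smul_eq_mul]
      _ ≤ q ^ k * (B.card * (q ^ n) ^ (k - 1)) := by
          apply Nat.mul_le_mul_right
          calc (univ.filter fun u : Fin k → F => u ≠ 0).card
              ≤ (univ : Finset (Fin k → F)).card := Finset.card_filter_le _ _
            _ = q ^ k := by
                rw [Finset.card_univ, Fintype.card_fun, hqcard, Fintype.card_fin]
  have hcardM : (Fintype.card (Matrix (Fin k) (Fin n) F) : ℝ) = ((q : ℝ) ^ n) ^ k := by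
    have h1 : Fintype.card (Matrix (Fin k) (Fin n) F)
        = Fintype.card (Fin k → Fin n → F) := rfl
    rw [h1, Fintype.card_fun, Fintype.card_fun, hqcard, Fintype.card_fin, Fintype.card_fin]
    push_cast
    ring
  have hMpos : (0 : ℝ) < (Fintype.card (Matrix (Fin k) (Fin n) F) : ℝ) := by
    rw [hcardM]; positivity
  have hkexp : (k : ℝ) ≤ (1 - qaryEntropy q δ - ε) * n + 1 := by
    rw [hk]
    exact le_of_lt (Nat.ceil_lt_add_one (by positivity))
  have hkey : ((univ.filter fun G => ¬ P G).card : ℝ) ≤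
      (q : ℝ) ^ (-(ε * n) + 1) * (Fintype.card (Matrix (Fin k) (Fin n) F) : ℝ) := by
    have hstep1 : ((univ.filter fun G => ¬ P G).card : ℝ) ≤
        (q : ℝ) ^ k * ((q : ℝ) ^ (qaryEntropy q δ * (n : ℝ)) * ((q : ℝ) ^ n) ^ (k - 1)) := by
      calc ((univ.filter fun G => ¬ P G).card : ℝ)
          ≤ ((q ^ k * (B.card * (q ^ n) ^ (k - 1)) : ℕ) : ℝ) := by exact_mod_cast hbadcard
        _ = (q : ℝ) ^ k * ((B.card : ℝ) * ((q : ℝ) ^ n) ^ (k - 1)) := by push_cast; ring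
        _ ≤ (q : ℝ) ^ k * ((q : ℝ) ^ (qaryEntropy q δ * (n : ℝ)) * ((q : ℝ) ^ n) ^ (k - 1)) := by
            apply mul_le_mul_of_nonneg_left _ (by positivity)
            exact mul_le_mul_of_nonneg_right hball (by positivity)
    have hstep2 : (q : ℝ) ^ k * (q : ℝ) ^ (qaryEntropy q δ * (n : ℝ)) ≤
        (q : ℝ) ^ (-(ε * n) + 1) * (q : ℝ) ^ n := by
      rw [← Real.rpow_natCast (q : ℝ) k, ← Real.rpow_natCast (q : ℝ) n,
        ← Real.rpow_add hq0, ← Real.rpow_add hq0]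
      apply Real.rpow_le_rpow_of_exponent_le (le_of_lt hq1)
      nlinarith [hkexp]
    calc ((univ.filter fun G => ¬ P G).card : ℝ)
        ≤ (q : ℝ) ^ k * ((q : ℝ) ^ (qaryEntropy q δ * (n : ℝ)) * ((q : ℝ) ^ n) ^ (k - 1)) :=
          hstep1
      _ = ((q : ℝ) ^ k * (q : ℝ) ^ (qaryEntropy q δ * (n : ℝ))) * ((q : ℝ) ^ n) ^ (k - 1) := by
          ring
      _ ≤ ((q : ℝ) ^ (-(ε * n) + 1) * (q : ℝ) ^ n) * ((q : ℝ) ^ n) ^ (k - 1) :=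
          mul_le_mul_of_nonneg_right hstep2 (by positivity)
      _ = (q : ℝ) ^ (-(ε * n) + 1) * (((q : ℝ) ^ n) ^ (k - 1) * (q : ℝ) ^ n) := by ring
      _ = (q : ℝ) ^ (-(ε * n) + 1) * ((q : ℝ) ^ n) ^ k := by
          rw [← pow_succ]
          congr 2
          omega
      _ = (q : ℝ) ^ (-(ε * n) + 1) * (Fintype.card (Matrix (Fin k) (Fin n) F) : ℝ) := by
          rw [hcardM]
  have hgood : ((univ.filter P).card : ℝ)
      = (Fintype.card (Matrix (Fin k) (Fin n) F) : ℝ)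
        - ((univ.filter fun G => ¬ P G).card : ℝ) := by
    have h2 : ((univ.filter P).card : ℝ) + ((univ.filter fun G => ¬ P G).card : ℝ)
        = (Fintype.card (Matrix (Fin k) (Fin n) F) : ℝ) := by exact_mod_cast hsplit
    linarith
  rw [le_div_iff₀ hMpos]
  have hring : (1 - (q : ℝ) ^ (-(ε * n) + 1)) * (Fintype.card (Matrix (Fin k) (Fin n) F) : ℝ)
      = (Fintype.card (Matrix (Fin k) (Fin n) F) : ℝ)
        - (q : ℝ) ^ (-(ε * n) + 1) * (Fintype.card (Matrix (Fin k) (Fin n) F) : ℝ) := by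
    ring
  linarith
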